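/- Under the LOLOHA generative model — V finite of size k, g ≥ 2, 0 < ε₁ < ε∞, ε_IRR = ln((e^{ε∞+ε₁}−1)/(e^{ε∞}−e^{ε₁})), p₁ = e^{ε∞}/(e^{ε∞}+g−1), q₁' = 1/g, p₂ = e^{ε_IRR}/(e^{ε_IRR}+g−1), q₂ = 1/(e^{ε_IRR}+g−1); n independent users, user u holding v_u ∈ V, sampling H_u uniformly from a pairwise-independent family ℋ of hash functions V → {1,…,g} and reporting x''_u = GRR(GRR(H_u(v_u); ε∞); ε_IRR) — the estimator f̂(v) = (C(v) − n·q₁'·(p₂−q₂) − n·q₂)/(n·(p₁−q₁')·(p₂−q₂)), with C(v) = |{u : H_u(v) = x''_u}|, is unbiased: E[f̂(v)] = f(v) = |{u : v_u = v}|/n for every v ∈ V. -/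

import Mathlib

noncomputable section

/-- One user's sample point in the LOLOHA generative model: the hash function,
the memoized PRR output, and the reported IRR output. -/
abbrev LolohaSample (V : Type) (g : ℕ) : Type := (V → Fin g) × Fin g × Fin g

/-- Probability weight of a joint outcome `ω` of `n` independent users, where user `u`
holds `vu u`, samples `H_u` uniformly from `ℋ`, memoizes `z_u = GRR(H_u(v_u); ε∞)`
(keep-probability `p₁`, switch-probability `q₁`) and reports
`x''_u = GRR(z_u; ε_IRR)` (probabilities `p₂`, `q₂`). -/
def lolohaWeight (V : Type) [Fintype V] [DecidableEq V] (g n : ℕ)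
    (ℋ : Finset (V → Fin g)) (p₁ q₁ p₂ q₂ : ℝ)
    (vu : Fin n → V) (ω : Fin n → LolohaSample V g) : ℝ :=
  ∏ u : Fin n,
    ((if (ω u).1 ∈ ℋ then (1 : ℝ) / ℋ.card else 0) *
     (if (ω u).2.1 = (ω u).1 (vu u) then p₁ else q₁) *
     (if (ω u).2.2 = (ω u).2.1 then p₂ else q₂))

/-- The server-side support count `C(v) = |{u : H_u(v) = x''_u}|`. -/
def lolohaCount (V : Type) [Fintype V] [DecidableEq V] (g n : ℕ)
    (v : V) (ω : Fin n → LolohaSample V g) : ℕ :=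
  (Finset.univ.filter fun u : Fin n => (ω u).1 v = (ω u).2.2).card

/-- The LOLOHA frequency estimator
`f̂(v) = (C(v) − n·q₁'·(p₂−q₂) − n·q₂) / (n·(p₁−q₁')·(p₂−q₂))`. -/
def lolohaEst (V : Type) [Fintype V] [DecidableEq V] (g n : ℕ)
    (p₁ q₁' p₂ q₂ : ℝ) (v : V) (ω : Fin n → LolohaSample V g) : ℝ :=
  ((lolohaCount V g n v ω : ℝ) - n * q₁' * (p₂ - q₂) - n * q₂) /
    (n * (p₁ - q₁') * (p₂ - q₂))

/-- The true frequency `f(v) = |{u : v_u = v}| / n`. -/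
def lolohaTrueFreq (V : Type) [DecidableEq V] (n : ℕ) (vu : Fin n → V) (v : V) : ℝ :=
  ((Finset.univ.filter fun u : Fin n => vu u = v).card : ℝ) / n

end


section AuxLoloha

private lemma loloha_sum_one_ite (g : ℕ) (a : Fin g) (P Q : ℝ) :
    ∑ z : Fin g, (if z = a then P else Q) = (g : ℝ) * Q + (P - Q) := by
  have h : ∀ z : Fin g, (if z = a then P else Q) = Q + (if z = a then P - Q else 0) := by
    intro z; by_cases hz : z = a <;> simp [hz]
  simp only [h, Finset.sum_add_distrib, Finset.sum_const, Finset.sum_ite_eq',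
    Finset.mem_univ, if_true, Finset.card_univ, Fintype.card_fin, nsmul_eq_mul]

private lemma loloha_sum_two_ite (g : ℕ) (a b : Fin g) (P Q p q : ℝ) :
    ∑ z : Fin g, (if z = a then P else Q) * (if b = z then p else q)
      = ((g : ℝ) * Q * q + (P - Q) * q + Q * (p - q))
        + (if a = b then (P - Q) * (p - q) else 0) := by
  have h : ∀ z : Fin g, (if z = a then P else Q) * (if b = z then p else q)
      = Q * q + (if z = a then (P - Q) * q else 0) + (if z = b then Q * (p - q) else 0)
        + (if z = a then (if z = b then (P - Q) * (p - q) else 0) else 0) := by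
    intro z
    have hb : (if b = z then p else q) = (if z = b then p else q) := by
      by_cases h : z = b
      · simp [h]
      · rw [if_neg h, if_neg (show ¬ b = z from fun e => h e.symm)]
    rw [hb]
    by_cases h1 : z = a <;> by_cases h2 : z = b
    · have hab : a = b := h1.symm.trans h2
      simp [h1, h2, hab]; ring
    · have hab : ¬ a = b := fun e => h2 (h1.trans e)
      simp [h1, hab]; ring
    · have hab : ¬ a = b := fun e => h1 (h2.trans e.symm)
      have hba : ¬ b = a := fun e => hab e.symm
      simp [h1, h2, hab, hba]; ring
    · simp [h1, h2]
  simp only [h, Finset.sum_add_distrib, Finset.sum_const, Finset.sum_ite_eq',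
    Finset.mem_univ, if_true, Finset.card_univ, Fintype.card_fin, nsmul_eq_mul]
  ring

end AuxLoloha

/-- **Unbiasedness of the LOLOHA estimator** under the LOLOHA generative model
with a pairwise-independent hash family: `E[f̂(v)] = f(v)` for every `v`. -/
theorem loloha_estimator_unbiased
    (V : Type) [Fintype V] [DecidableEq V] (k g n : ℕ)
    (hk : Fintype.card V = k) (hg : 2 ≤ g) (hn : 1 ≤ n)
    (ε₁ εinf : ℝ) (h₁ : 0 < ε₁) (h₂ : ε₁ < εinf)
    (εIRR : ℝ)
    (hεIRR : εIRR = Real.log ((Real.exp (εinf + ε₁) - 1) / (Real.exp εinf - Real.exp ε₁)))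
    (p₁ q₁ q₁' p₂ q₂ : ℝ)
    (hp₁ : p₁ = Real.exp εinf / (Real.exp εinf + g - 1))
    (hq₁ : q₁ = 1 / (Real.exp εinf + g - 1))
    (hq₁' : q₁' = 1 / (g : ℝ))
    (hp₂ : p₂ = Real.exp εIRR / (Real.exp εIRR + g - 1))
    (hq₂ : q₂ = 1 / (Real.exp εIRR + g - 1))
    (ℋ : Finset (V → Fin g)) (hne : ℋ.Nonempty)
    (hpi : ∀ v w : V, v ≠ w → ∀ a b : Fin g,
      (ℋ.filter fun H => H v = a ∧ H w = b).card * g ^ 2 = ℋ.card)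
    (vu : Fin n → V)
    (v : V) :
    ∑ ω : Fin n → LolohaSample V g,
        lolohaWeight V g n ℋ p₁ q₁ p₂ q₂ vu ω *
          lolohaEst V g n p₁ q₁' p₂ q₂ v ω =
      lolohaTrueFreq V n vu v := by
  classical
  -- notation
  set c : ℝ := (ℋ.card : ℝ) with hc
  -- basic numeric facts
  have hg2 : (2:ℝ) ≤ (g:ℝ) := by exact_mod_cast hg
  have hgpos : (0:ℝ) < (g:ℝ) := by linarith
  have hg0' : (g:ℝ) ≠ 0 := ne_of_gt hgpos
  have hn0 : (n:ℝ) ≠ 0 := by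
    have : (1:ℝ) ≤ (n:ℝ) := by exact_mod_cast hn
    linarith
  have hc0 : c ≠ 0 := by
    have := hne.card_pos
    simp only [hc]
    exact_mod_cast this.ne'
  have hexp1 : 1 < Real.exp εinf := by
    calc (1:ℝ) = Real.exp 0 := Real.exp_zero.symm
    _ < Real.exp εinf := Real.exp_lt_exp.mpr (by linarith)
  have hexpe1 : 1 < Real.exp ε₁ := by
    calc (1:ℝ) = Real.exp 0 := Real.exp_zero.symm
    _ < Real.exp ε₁ := Real.exp_lt_exp.mpr h₁
  have hEinf : 0 < Real.exp εinf + (g:ℝ) - 1 := by linarith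
  have hIRR1 : 1 < Real.exp εIRR := by
    have hden : 0 < Real.exp εinf - Real.exp ε₁ :=
      sub_pos.2 (Real.exp_lt_exp.2 h₂)
    have hadd : Real.exp (εinf + ε₁) = Real.exp εinf * Real.exp ε₁ := Real.exp_add _ _
    have hnum : Real.exp εinf - Real.exp ε₁ < Real.exp (εinf + ε₁) - 1 := by
      rw [hadd]; nlinarith
    have hnum0 : 0 < Real.exp (εinf + ε₁) - 1 := by linarith
    have hratio : 1 < (Real.exp (εinf + ε₁) - 1) / (Real.exp εinf - Real.exp ε₁) :=
      (one_lt_div hden).2 hnum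
    rw [hεIRR, Real.exp_log (by positivity)]
    exact hratio
  have hE2 : 0 < Real.exp εIRR + (g:ℝ) - 1 := by linarith
  have hnorm1 : p₁ + ((g:ℝ) - 1) * q₁ = 1 := by
    rw [hp₁, hq₁]; field_simp; ring
  have hnorm2 : p₂ + ((g:ℝ) - 1) * q₂ = 1 := by
    rw [hp₂, hq₂]; field_simp; ring
  have hd2 : 0 < p₂ - q₂ := by
    rw [hp₂, hq₂, div_sub_div_same]
    exact div_pos (by linarith) hE2
  have hd1 : 0 < p₁ - q₁' := by
    rw [hp₁, hq₁', sub_pos, div_lt_div_iff₀ hgpos hEinf]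
    nlinarith
  have hp1sub : p₁ = 1 - ((g:ℝ) - 1) * q₁ := by linarith
  -- the per-user one-point weight
  set w : Fin n → LolohaSample V g → ℝ := fun u s =>
    (if s.1 ∈ ℋ then (1 : ℝ) / c else 0) *
      (if s.2.1 = s.1 (vu u) then p₁ else q₁) *
      (if s.2.2 = s.2.1 then p₂ else q₂) with hw
  have hWdef : ∀ ω : Fin n → LolohaSample V g,
      lolohaWeight V g n ℋ p₁ q₁ p₂ q₂ vu ω = ∏ u, w u (ω u) := fun ω => rfl
  -- normalization of the hash part
  have hA : ∑ H : V → Fin g, (if H ∈ ℋ then (1:ℝ)/c else 0) = 1 := by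
    rw [Finset.sum_ite_mem, Finset.univ_inter, Finset.sum_const, nsmul_eq_mul]
    field_simp
    exact hc.symm
  -- inner x-sum with the indicator
  have hx : ∀ (z b : Fin g),
      ∑ x : Fin g, (if x = z then p₂ else q₂) * (if b = x then (1:ℝ) else 0)
        = (if b = z then p₂ else q₂) := by
    intro z b
    have h : ∀ x : Fin g, (if x = z then p₂ else q₂) * (if b = x then (1:ℝ) else 0)
        = (if b = x then (if x = z then p₂ else q₂) else 0) := by
      intro x; by_cases hbx : b = x <;> simp [hbx]
    simp only [h, Finset.sum_ite_eq, Finset.mem_univ, if_true]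
  -- total mass of each one-user weight is 1
  have hT0 : ∀ u, ∑ s : LolohaSample V g, w u s = 1 := by
    intro u
    rw [Fintype.sum_prod_type]
    have h1 : ∀ H : V → Fin g, ∑ zx : Fin g × Fin g, w u (H, zx)
        = (if H ∈ ℋ then (1:ℝ)/c else 0) := by
      intro H
      rw [Fintype.sum_prod_type]
      have h2 : ∀ z : Fin g, ∑ x : Fin g, w u (H, z, x)
          = (if H ∈ ℋ then (1:ℝ)/c else 0) * (if z = H (vu u) then p₁ else q₁) := by
        intro z
        rw [show (∑ x : Fin g, w u (H, z, x)) = ((if H ∈ ℋ then (1:ℝ)/c else 0) *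
          (if z = H (vu u) then p₁ else q₁)) * ∑ x : Fin g, (if x = z then p₂ else q₂) from by
            rw [Finset.mul_sum]]
        rw [loloha_sum_one_ite]
        have : (g:ℝ) * q₂ + (p₂ - q₂) = 1 := by linarith
        rw [this, mul_one]
      simp only [h2]
      rw [← Finset.mul_sum, loloha_sum_one_ite]
      have : (g:ℝ) * q₁ + (p₁ - q₁) = 1 := by linarith
      rw [this, mul_one]
    simp only [h1]
    exact hA
  -- collision probability for distinct inputs
  have hcolR : vu ≠ vu → True := fun _ => trivial
  -- expectation of the one-user indicator
  have hT1 : ∀ u, ∑ s : LolohaSample V g,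
      w u s * (if s.1 v = s.2.2 then (1:ℝ) else 0)
        = (q₁' * (p₂ - q₂) + q₂) + (if vu u = v then (p₁ - q₁') * (p₂ - q₂) else 0) := by
    intro u
    rw [Fintype.sum_prod_type]
    have h1 : ∀ H : V → Fin g,
        ∑ zx : Fin g × Fin g, w u (H, zx) * (if H v = zx.2 then (1:ℝ) else 0)
        = (if H ∈ ℋ then (1:ℝ)/c else 0) *
            (((g:ℝ) * q₁ * q₂ + (p₁ - q₁) * q₂ + q₁ * (p₂ - q₂))
              + (if H (vu u) = H v then (p₁ - q₁) * (p₂ - q₂) else 0)) := by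
      intro H
      rw [Fintype.sum_prod_type]
      have h2 : ∀ z : Fin g, ∑ x : Fin g, w u (H, z, x) * (if H v = x then (1:ℝ) else 0)
          = (if H ∈ ℋ then (1:ℝ)/c else 0) *
              ((if z = H (vu u) then p₁ else q₁) * (if H v = z then p₂ else q₂)) := by
        intro z
        simp only [hw]
        have h3 : ∀ x : Fin g,
            (if H ∈ ℋ then (1:ℝ)/c else 0) * (if z = H (vu u) then p₁ else q₁) *
              (if x = z then p₂ else q₂) * (if H v = x then (1:ℝ) else 0)
            = (if H ∈ ℋ then (1:ℝ)/c else 0) * (if z = H (vu u) then p₁ else q₁) *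
              ((if x = z then p₂ else q₂) * (if H v = x then (1:ℝ) else 0)) := by
          intro x; ring
        simp only [h3]
        rw [← Finset.mul_sum, hx, mul_assoc]
      simp only [h2]
      rw [← Finset.mul_sum, loloha_sum_two_ite]
    simp only [h1]
    -- now sum over H
    have hsplit : ∀ H : V → Fin g,
        (if H ∈ ℋ then (1:ℝ)/c else 0) *
            (((g:ℝ) * q₁ * q₂ + (p₁ - q₁) * q₂ + q₁ * (p₂ - q₂))
              + (if H (vu u) = H v then (p₁ - q₁) * (p₂ - q₂) else 0))
        = ((g:ℝ) * q₁ * q₂ + (p₁ - q₁) * q₂ + q₁ * (p₂ - q₂)) *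
            (if H ∈ ℋ then (1:ℝ)/c else 0)
          + (if H ∈ ℋ ∧ H (vu u) = H v then (p₁ - q₁) * (p₂ - q₂) / c else 0) := by
      intro H
      by_cases h1 : H ∈ ℋ <;> by_cases h2 : H (vu u) = H v <;> simp [h1, h2] <;> ring
    simp only [hsplit]
    rw [Finset.sum_add_distrib, ← Finset.mul_sum, hA, mul_one]
    have hfil : ∑ H : V → Fin g,
        (if H ∈ ℋ ∧ H (vu u) = H v then (p₁ - q₁) * (p₂ - q₂) / c else 0)
        = ((ℋ.filter fun H => H (vu u) = H v).card : ℝ) * ((p₁ - q₁) * (p₂ - q₂) / c) := by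
      have : (Finset.univ.filter fun H : V → Fin g => H ∈ ℋ ∧ H (vu u) = H v)
          = ℋ.filter fun H => H (vu u) = H v := by
        ext H; simp
      rw [← Finset.sum_filter, this, Finset.sum_const, nsmul_eq_mul]
    rw [hfil]
    by_cases huv : vu u = v
    · have : (ℋ.filter fun H => H (vu u) = H v) = ℋ := by
        apply Finset.filter_true_of_mem
        intro H _; rw [huv]
      rw [this, if_pos huv, hq₁', hp1sub]
      field_simp
      ring
    · -- collision count via pairwise independence
      have hcol : ((ℋ.filter fun H => H (vu u) = H v).card) * g = ℋ.card := by
        have hpart : (ℋ.filter fun H => H (vu u) = H v).card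
            = ∑ a : Fin g, (ℋ.filter fun H => H (vu u) = a ∧ H v = a).card := by
          rw [Finset.card_eq_sum_card_fiberwise
            (f := fun H : V → Fin g => H (vu u)) (t := Finset.univ)
            (fun x _ => Finset.mem_univ _)]
          apply Finset.sum_congr rfl
          intro a _
          congr 1
          rw [Finset.filter_filter]
          apply Finset.filter_congr
          intro H _
          constructor
          · rintro ⟨h1, h2⟩; exact ⟨h2, h1.symm.trans h2⟩
          · rintro ⟨h1, h2⟩; exact ⟨h1.trans h2.symm, h1⟩
        have hsum : (∑ a : Fin g, (ℋ.filter fun H => H (vu u) = a ∧ H v = a).card) * g ^ 2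
            = g * ℋ.card := by
          rw [Finset.sum_mul]
          have hpia : ∀ a : Fin g,
              (ℋ.filter fun H => H (vu u) = a ∧ H v = a).card * g ^ 2 = ℋ.card := by
            intro a; exact hpi (vu u) v huv a a
          simp only [hpia]
          simp [Finset.sum_const, Finset.card_univ, mul_comm]
        have hg1 : 0 < g := lt_of_lt_of_le Nat.zero_lt_two hg
        have : ((ℋ.filter fun H => H (vu u) = H v).card * g) * g = ℋ.card * g := by
          rw [← hpart] at hsum
          calc ((ℋ.filter fun H => H (vu u) = H v).card * g) * g
              = (ℋ.filter fun H => H (vu u) = H v).card * g ^ 2 := by ring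
          _ = g * ℋ.card := hsum
          _ = ℋ.card * g := by ring
        exact Nat.eq_of_mul_eq_mul_right hg1 this
      have hcolR : ((ℋ.filter fun H => H (vu u) = H v).card : ℝ) = c / g := by
        have : (((ℋ.filter fun H => H (vu u) = H v).card : ℝ)) * g = c := by
          rw [hc]; exact_mod_cast hcol
        field_simp at this ⊢
        linarith
      rw [hcolR, if_neg huv, hq₁', hp1sub]
      field_simp
      ring
  -- factorization of sums over product spaces
  have hfact : ∀ f : Fin n → LolohaSample V g → ℝ,
      ∑ ω : Fin n → LolohaSample V g, ∏ u, f u (ω u) = ∏ u, ∑ s, f u s :=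
    fun f => (Fintype.prod_sum f).symm
  -- the weights sum to 1
  have hWsum : ∑ ω : Fin n → LolohaSample V g,
      lolohaWeight V g n ℋ p₁ q₁ p₂ q₂ vu ω = 1 := by
    simp only [hWdef]
    refine (hfact w).trans ?_
    simp only [hT0]
    exact Finset.prod_const_one
  -- the count as a sum of indicators
  have hCcast : ∀ ω : Fin n → LolohaSample V g,
      ((lolohaCount V g n v ω : ℕ) : ℝ)
        = ∑ u, (if (ω u).1 v = (ω u).2.2 then (1:ℝ) else 0) := by
    intro ω
    rw [lolohaCount, Finset.card_filter]
    push_cast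
    rfl
  -- expectation of the count
  have hWC : ∑ ω : Fin n → LolohaSample V g,
      lolohaWeight V g n ℋ p₁ q₁ p₂ q₂ vu ω * ((lolohaCount V g n v ω : ℕ) : ℝ)
      = ∑ u : Fin n, ((q₁' * (p₂ - q₂) + q₂)
          + (if vu u = v then (p₁ - q₁') * (p₂ - q₂) else 0)) := by
    have h1 : ∀ ω : Fin n → LolohaSample V g,
        lolohaWeight V g n ℋ p₁ q₁ p₂ q₂ vu ω * ((lolohaCount V g n v ω : ℕ) : ℝ)
        = ∑ u : Fin n, (∏ j, w j (ω j)) * (if (ω u).1 v = (ω u).2.2 then (1:ℝ) else 0) := by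
      intro ω
      rw [hWdef, hCcast, Finset.mul_sum]
    simp only [h1]
    rw [Finset.sum_comm]
    apply Finset.sum_congr rfl
    intro u _
    -- factor out user u
    have h2 : ∀ ω : Fin n → LolohaSample V g,
        (∏ j, w j (ω j)) * (if (ω u).1 v = (ω u).2.2 then (1:ℝ) else 0)
        = ∏ j, (if j = u
            then w j (ω j) * (if (ω j).1 v = (ω j).2.2 then (1:ℝ) else 0)
            else w j (ω j)) := by
      intro ω
      rw [← Finset.prod_erase_mul Finset.univ _ (Finset.mem_univ u),
        ← Finset.prod_erase_mul Finset.univ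
          (fun j => if j = u
            then w j (ω j) * (if (ω j).1 v = (ω j).2.2 then (1:ℝ) else 0)
            else w j (ω j)) (Finset.mem_univ u)]
      simp only [eq_self_iff_true, if_true]
      have h3 : ∀ j ∈ Finset.univ.erase u,
          (if j = u
            then w j (ω j) * (if (ω j).1 v = (ω j).2.2 then (1:ℝ) else 0)
            else w j (ω j)) = w j (ω j) :=
        fun j hj => if_neg (Finset.ne_of_mem_erase hj)
      rw [Finset.prod_congr rfl h3, mul_assoc]
    simp only [h2]
    refine (hfact (fun j s => if j = u
        then w j s * (if s.1 v = s.2.2 then (1:ℝ) else 0)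
        else w j s)).trans ?_
    have h4 : ∀ j : Fin n, ∑ s : LolohaSample V g,
        (if j = u then w j s * (if s.1 v = s.2.2 then (1:ℝ) else 0) else w j s)
        = (if j = u
            then (q₁' * (p₂ - q₂) + q₂) + (if vu u = v then (p₁ - q₁') * (p₂ - q₂) else 0)
            else 1) := by
      intro j
      by_cases hj : j = u
      · subst hj; simp only [eq_self_iff_true, if_true]; exact hT1 j
      · rw [if_neg hj]
        simp only [if_neg hj]
        exact hT0 j
    simp only [h4]
    rw [Finset.prod_ite_eq' Finset.univ u
      (fun _ => (q₁' * (p₂ - q₂) + q₂) + (if vu u = v then (p₁ - q₁') * (p₂ - q₂) else 0))]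
    rw [if_pos (Finset.mem_univ u)]
  -- assemble
  have hNv : ∑ u : Fin n, ((q₁' * (p₂ - q₂) + q₂)
        + (if vu u = v then (p₁ - q₁') * (p₂ - q₂) else 0))
      = (n:ℝ) * (q₁' * (p₂ - q₂) + q₂)
        + ((Finset.univ.filter fun u : Fin n => vu u = v).card : ℝ)
            * ((p₁ - q₁') * (p₂ - q₂)) := by
    rw [Finset.sum_add_distrib, Finset.sum_const, Finset.card_univ, Fintype.card_fin,
      nsmul_eq_mul, ← Finset.sum_filter, Finset.sum_const, nsmul_eq_mul]
  have hEst : ∀ ω : Fin n → LolohaSample V g,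
      lolohaWeight V g n ℋ p₁ q₁ p₂ q₂ vu ω * lolohaEst V g n p₁ q₁' p₂ q₂ v ω
      = (lolohaWeight V g n ℋ p₁ q₁ p₂ q₂ vu ω * ((lolohaCount V g n v ω : ℕ) : ℝ))
          / ((n:ℝ) * (p₁ - q₁') * (p₂ - q₂))
        - lolohaWeight V g n ℋ p₁ q₁ p₂ q₂ vu ω *
            (((n:ℝ) * q₁' * (p₂ - q₂) + (n:ℝ) * q₂) / ((n:ℝ) * (p₁ - q₁') * (p₂ - q₂))) := by
    intro ω
    rw [lolohaEst]
    ring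
  simp only [hEst]
  rw [Finset.sum_sub_distrib, ← Finset.sum_div, ← Finset.sum_mul, hWC, hWsum, hNv, one_mul,
    lolohaTrueFreq]
  have hd1' : p₁ - q₁' ≠ 0 := ne_of_gt hd1
  have hd2' : p₂ - q₂ ≠ 0 := ne_of_gt hd2
  field_simp
  ring
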